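/- Let a₀ > 0, K > 0, φ₀ ∈ ℝ. Define a(t) = a₀ + t²/(2a₀), φ(t) = φ₀ + (1/K)·log(1 + t²/(2a₀²)), V(x) = (5·exp(−K(x − φ₀)) − 2·exp(−2K(x − φ₀)))/(K² a₀²), H(t) = a'(t)/a(t), ρ(t) = φ'(t)²/2 + V(φ(t)), p(t) = φ'(t)²/2 − V(φ(t)). Then for all t ∈ ℝ: V(φ(t)) = (10t² + 12a₀²)/(K²(2a₀² + t²)²), and both Einstein equations hold with curvature k = 1 and no matter (D = 0): H(t)² + 1/a(t)² = (K²/3) ρ(t) and a''(t)/a(t) = −(K²/6)(ρ(t) + 3 p(t)). -/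

import Mathlib

open Real

/-- The Özer–Taha solution with a(t) = a₀ + t²/(2a₀):
V(φ(t)) = (10t² + 12a₀²)/(K²(2a₀² + t²)²) and both Einstein equations hold
with k = 1 and no matter. -/
theorem ozer_taha_solution_two
    (a₀ K φ₀ : ℝ) (ha₀ : 0 < a₀) (hK : 0 < K)
    (a φ V H ρ p : ℝ → ℝ)
    (ha : a = fun t => a₀ + t ^ 2 / (2 * a₀))
    (hφ : φ = fun t => φ₀ + 1 / K * Real.log (1 + t ^ 2 / (2 * a₀ ^ 2)))
    (hV : V = fun x => (5 * Real.exp (-K * (x - φ₀))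
      - 2 * Real.exp (-2 * K * (x - φ₀))) / (K ^ 2 * a₀ ^ 2))
    (hH : H = fun t => deriv a t / a t)
    (hρ : ρ = fun t => (deriv φ t) ^ 2 / 2 + V (φ t))
    (hp : p = fun t => (deriv φ t) ^ 2 / 2 - V (φ t)) :
    ∀ t : ℝ,
      V (φ t) = (10 * t ^ 2 + 12 * a₀ ^ 2) / (K ^ 2 * (2 * a₀ ^ 2 + t ^ 2) ^ 2) ∧
      H t ^ 2 + 1 / a t ^ 2 = K ^ 2 / 3 * ρ t ∧
      deriv (deriv a) t / a t = -(K ^ 2 / 6) * (ρ t + 3 * p t) := by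
  subst ha hφ hV hH hρ hp
  intro t
  have ha0 : (a₀ : ℝ) ≠ 0 := ha₀.ne'
  have hK0 : K ≠ 0 := hK.ne'
  have hupos : (0 : ℝ) < 1 + t ^ 2 / (2 * a₀ ^ 2) := by positivity
  have hs : (0 : ℝ) < 2 * a₀ ^ 2 + t ^ 2 := by positivity
  -- first derivative of a
  have hda : ∀ s : ℝ, deriv (fun t : ℝ => a₀ + t ^ 2 / (2 * a₀)) s = s / a₀ := by
    intro s
    have h1 : HasDerivAt (fun t : ℝ => a₀ + t ^ 2 / (2 * a₀)) (s / a₀) s := by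
      have h2 : HasDerivAt (fun t : ℝ => t ^ 2) (2 * s) s := by
        simpa using hasDerivAt_pow 2 s
      have := (h2.div_const (2 * a₀)).const_add a₀
      rw [show s / a₀ = 2 * s / (2 * a₀) by rw [mul_div_mul_left _ _ (two_ne_zero' ℝ)]]
      exact this
    exact h1.deriv
  -- second derivative of a
  have hdda : deriv (deriv (fun t : ℝ => a₀ + t ^ 2 / (2 * a₀))) t = 1 / a₀ := by
    have heq : deriv (fun t : ℝ => a₀ + t ^ 2 / (2 * a₀)) = fun s : ℝ => s / a₀ :=
      funext hda
    rw [heq]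
    have h1 : HasDerivAt (fun s : ℝ => s / a₀) (1 / a₀) t := by
      simpa [one_div] using (hasDerivAt_id t).div_const a₀
    exact h1.deriv
  -- derivative of φ
  have hdφ : deriv (fun t : ℝ => φ₀ + 1 / K * Real.log (1 + t ^ 2 / (2 * a₀ ^ 2))) t
      = 2 * t / (K * (2 * a₀ ^ 2 + t ^ 2)) := by
    have h1 : HasDerivAt (fun t : ℝ => 1 + t ^ 2 / (2 * a₀ ^ 2))
        (2 * t / (2 * a₀ ^ 2)) t := by
      have h2 : HasDerivAt (fun t : ℝ => t ^ 2) (2 * t) t := by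
        simpa using hasDerivAt_pow 2 t
      simpa using (h2.div_const (2 * a₀ ^ 2)).const_add 1
    have h3 := ((h1.log hupos.ne').const_mul (1 / K)).const_add φ₀
    rw [h3.deriv]
    field_simp
  -- value of exp(-K (φ t - φ₀))
  have hexp1 : Real.exp (-K * ((φ₀ + 1 / K * Real.log (1 + t ^ 2 / (2 * a₀ ^ 2))) - φ₀))
      = (1 + t ^ 2 / (2 * a₀ ^ 2))⁻¹ := by
    have harg : -K * ((φ₀ + 1 / K * Real.log (1 + t ^ 2 / (2 * a₀ ^ 2))) - φ₀)
        = -Real.log (1 + t ^ 2 / (2 * a₀ ^ 2)) := by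
      field_simp
      ring
    rw [harg, Real.exp_neg, Real.exp_log hupos]
  have hexp2 : Real.exp (-2 * K * ((φ₀ + 1 / K * Real.log (1 + t ^ 2 / (2 * a₀ ^ 2))) - φ₀))
      = ((1 + t ^ 2 / (2 * a₀ ^ 2))⁻¹) ^ 2 := by
    have harg : -2 * K * ((φ₀ + 1 / K * Real.log (1 + t ^ 2 / (2 * a₀ ^ 2))) - φ₀)
        = (-K * ((φ₀ + 1 / K * Real.log (1 + t ^ 2 / (2 * a₀ ^ 2))) - φ₀))
          + (-K * ((φ₀ + 1 / K * Real.log (1 + t ^ 2 / (2 * a₀ ^ 2))) - φ₀)) := by ring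
    rw [harg, Real.exp_add, hexp1]
    ring
  have hVval : (5 * Real.exp (-K * ((φ₀ + 1 / K * Real.log (1 + t ^ 2 / (2 * a₀ ^ 2))) - φ₀))
      - 2 * Real.exp (-2 * K * ((φ₀ + 1 / K * Real.log (1 + t ^ 2 / (2 * a₀ ^ 2))) - φ₀)))
      / (K ^ 2 * a₀ ^ 2)
      = (10 * t ^ 2 + 12 * a₀ ^ 2) / (K ^ 2 * (2 * a₀ ^ 2 + t ^ 2) ^ 2) := by
    rw [hexp1, hexp2]
    field_simp
    ring
  refine ⟨by simpa using hVval, ?_, ?_⟩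
  · simp only [hda, hdφ]
    rw [hVval]
    have hden : a₀ + t ^ 2 / (2 * a₀) ≠ 0 := by positivity
    field_simp
    ring
  · simp only [hdda, hdφ]
    rw [hVval]
    have hden : a₀ + t ^ 2 / (2 * a₀) ≠ 0 := by positivity
    field_simp
    ring
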